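/- For any non-backtracking path (v_0, …, v_k) in the universal covering tree T and z ∈ ℂ∖ℝ: G(v_0, v_k; z) = −(∏_{j=0}^{k−1} ζ^z(v_{j+1}, v_j)) / (2m^z(v_k)) = −(∏_{j=0}^{k−1} ζ^z(v_j, v_{j+1})) / (2m^z(v_0)). -/

import Mathlib

open Finset

/-- `g` is the Green function of the adjacency operator of `T` at `z`. -/
def IsGreen {V : Type*} [DecidableEq V] (T : SimpleGraph V) [T.LocallyFinite]
    (z : ℂ) (g : V → V → ℂ) : Prop :=
  (∀ y : V, Summable fun x : V => ‖g x y‖ ^ 2) ∧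
  (∀ x y : V, (∑ u ∈ T.neighborFinset x, g u y) - z * g x y =
    if x = y then 1 else 0)

/-- `g` is the Green function of `T` with the single edge `{a, b}` removed. -/
def IsGreenDel {V : Type*} [DecidableEq V] (T : SimpleGraph V) [T.LocallyFinite]
    (a b : V) (z : ℂ) (g : V → V → ℂ) : Prop :=
  (∀ y : V, Summable fun x : V => ‖g x y‖ ^ 2) ∧
  (∀ x y : V, (∑ u ∈ T.neighborFinset x,
      if (x = a ∧ u = b) ∨ (x = b ∧ u = a) then 0 else g u y) - z * g x y =
    if x = y then 1 else 0)

section Abstract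
variable {V : Type*} [DecidableEq V] {N : V → Finset V} {z : ℂ} {D : ℕ}

private lemma GP_edge_summable_left {f : V → ℝ} (hf : Summable f) (hf0 : ∀ x, 0 ≤ f x)
    (hD : ∀ x, (N x).card ≤ D) :
    Summable (fun p : V × V => if p.2 ∈ N p.1 then f p.1 else 0) := by
  refine (summable_prod_of_nonneg ?_).2 ⟨?_, ?_⟩
  · intro p; dsimp; split
    · exact hf0 _
    · exact le_refl 0
  · intro x
    exact summable_of_ne_finset_zero (s := N x) (fun u hu => by simp [hu])
  · have heq : (fun x => ∑' u, if u ∈ N x then f x else 0)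
        = fun x => ((N x).card : ℝ) * f x := by
      funext x
      rw [tsum_eq_sum (s := N x) (fun u hu => by simp [hu])]
      simp [Finset.sum_ite_of_true, Finset.sum_const, nsmul_eq_mul]
    rw [heq]
    refine Summable.of_nonneg_of_le (fun x => mul_nonneg (Nat.cast_nonneg _) (hf0 x))
      (fun x => ?_) (hf.mul_left (D : ℝ))
    exact mul_le_mul_of_nonneg_right (Nat.cast_le.mpr (hD x)) (hf0 x)

end Abstract

section Abstract2
variable {V : Type*} [DecidableEq V] {N : V → Finset V} {z : ℂ} {D : ℕ}

private lemma GP_edge_summable_right (hsym : ∀ x u, u ∈ N x ↔ x ∈ N u)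
    {g : V → ℝ} (hg : Summable g) (hg0 : ∀ x, 0 ≤ g x)
    (hD : ∀ x, (N x).card ≤ D) :
    Summable (fun p : V × V => if p.2 ∈ N p.1 then g p.2 else 0) := by
  have h1 := GP_edge_summable_left hg hg0 hD
  have h2 := h1.prod_symm
  exact h2.congr (fun p => by
    simp only [Prod.snd_swap, Prod.fst_swap]
    exact if_congr (hsym p.2 p.1) rfl rfl)

private lemma GP_edge_summable_mul (hsym : ∀ x u, u ∈ N x ↔ x ∈ N u)
    (hD : ∀ x, (N x).card ≤ D) {f g : V → ℂ}
    (hf : Summable fun x => ‖f x‖ ^ 2) (hg : Summable fun x => ‖g x‖ ^ 2) :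
    Summable (fun p : V × V => if p.2 ∈ N p.1 then f p.1 * g p.2 else 0) := by
  have hM := (GP_edge_summable_left hf (fun x => by positivity) hD).add
    (GP_edge_summable_right hsym hg (fun x => by positivity) hD)
  refine Summable.of_norm_bounded hM (fun p => ?_)
  by_cases h : p.2 ∈ N p.1
  · simp only [h, if_true, norm_mul]
    nlinarith [sq_nonneg (‖f p.1‖ - ‖g p.2‖), norm_nonneg (f p.1), norm_nonneg (g p.2)]
  · simp [h]

private lemma GP_edge_swap (hsym : ∀ x u, u ∈ N x ↔ x ∈ N u)
    (hD : ∀ x, (N x).card ≤ D) {f g : V → ℂ}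
    (hf : Summable fun x => ‖f x‖ ^ 2) (hg : Summable fun x => ‖g x‖ ^ 2) :
    ∑' x, (∑ u ∈ N x, f x * g u) = ∑' x, (∑ u ∈ N x, f u * g x) := by
  set P : V → V → ℂ := fun x u => if u ∈ N x then f x * g u else 0 with hP
  have hsumP : Summable (Function.uncurry P) := GP_edge_summable_mul hsym hD hf hg
  have h1 : ∀ x, Summable (P x) := fun x =>
    summable_of_ne_finset_zero (s := N x) (fun u hu => by simp [hP, hu])
  have h2 : ∀ u, Summable (fun x => P x u) := fun u =>
    summable_of_ne_finset_zero (s := N u) (fun x hx => by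
      have : u ∉ N x := fun hc => hx ((hsym x u).1 hc)
      simp [hP, this])
  have hcomm := Summable.tsum_comm' hsumP h1 h2
  have e1 : ∀ x, ∑ u ∈ N x, f x * g u = ∑' u, P x u := by
    intro x
    rw [tsum_eq_sum (s := N x) (fun u hu => by simp [hP, hu])]
    exact Finset.sum_congr rfl (fun u hu => by simp [hP, hu])
  have e2 : ∀ u, ∑ x ∈ N u, f x * g u = ∑' x, P x u := by
    intro u
    rw [tsum_eq_sum (s := N u) (fun x hx => by
      have : u ∉ N x := fun hc => hx ((hsym x u).1 hc)
      simp [hP, this])]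
    exact Finset.sum_congr rfl (fun x hx => by simp [hP, (hsym x u).2 hx])
  calc ∑' x, (∑ u ∈ N x, f x * g u) = ∑' (x) (u), P x u := by
        exact tsum_congr e1
    _ = ∑' (u) (x), P x u := hcomm.symm
    _ = ∑' u, (∑ x ∈ N u, f x * g u) := tsum_congr (fun u => (e2 u).symm)

end Abstract2

section Abstract3
variable {V : Type*} [DecidableEq V] {N : V → Finset V} {z : ℂ} {D : ℕ}

/-- Green-function-like data for an abstract locally finite symmetric neighbor structure. -/
def GLike (N : V → Finset V) (z : ℂ) (g : V → V → ℂ) : Prop :=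
  (∀ y, Summable fun x => ‖g x y‖ ^ 2) ∧
  (∀ x y, ∑ u ∈ N x, g u y = z * g x y + (if x = y then 1 else 0))

private lemma GP_l2_sub {f g : V → ℂ} (hf : Summable fun x => ‖f x‖ ^ 2)
    (hg : Summable fun x => ‖g x‖ ^ 2) :
    Summable fun x => ‖f x - g x‖ ^ 2 := by
  refine Summable.of_nonneg_of_le (fun x => by positivity) (fun x => ?_)
    ((hf.mul_left 2).add (hg.mul_left 2))
  have h := norm_sub_le (f x) (g x)
  nlinarith [norm_nonneg (f x), norm_nonneg (g x), norm_nonneg (f x - g x),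
    sq_nonneg (‖f x‖ - ‖g x‖)]

private lemma GP_l2_add {f g : V → ℂ} (hf : Summable fun x => ‖f x‖ ^ 2)
    (hg : Summable fun x => ‖g x‖ ^ 2) :
    Summable fun x => ‖f x + g x‖ ^ 2 := by
  refine Summable.of_nonneg_of_le (fun x => by positivity) (fun x => ?_)
    ((hf.mul_left 2).add (hg.mul_left 2))
  have h := norm_add_le (f x) (g x)
  nlinarith [norm_nonneg (f x), norm_nonneg (g x), norm_nonneg (f x + g x),
    sq_nonneg (‖f x‖ - ‖g x‖)]

private lemma GP_conj_self (w : ℂ) : (starRingEnd ℂ) w * w = ((‖w‖ ^ 2 : ℝ) : ℂ) := by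
  rw [mul_comm, Complex.mul_conj, Complex.sq_norm]

private lemma GP_uniq0 (hsym : ∀ x u, u ∈ N x ↔ x ∈ N u)
    (hD : ∀ x, (N x).card ≤ D) (hz : z.im ≠ 0) {f : V → ℂ}
    (hf : Summable fun x => ‖f x‖ ^ 2)
    (heq : ∀ x, ∑ u ∈ N x, f u = z * f x) : ∀ x, f x = 0 := by
  have hcf : Summable fun x => ‖(starRingEnd ℂ) (f x)‖ ^ 2 := by
    simpa using hf
  have key := GP_edge_swap hsym hD hcf hf
  have l1 : ∀ x, ∑ u ∈ N x, (starRingEnd ℂ) (f x) * f u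
      = z * ((‖f x‖ ^ 2 : ℝ) : ℂ) := by
    intro x
    rw [← Finset.mul_sum, heq x,
      show (starRingEnd ℂ) (f x) * (z * f x) = z * ((starRingEnd ℂ) (f x) * f x) by ring,
      GP_conj_self]
  have l2 : ∀ x, ∑ u ∈ N x, (starRingEnd ℂ) (f u) * f x
      = (starRingEnd ℂ) z * ((‖f x‖ ^ 2 : ℝ) : ℂ) := by
    intro x
    rw [← Finset.sum_mul, ← map_sum, heq x, map_mul,
      show (starRingEnd ℂ) z * (starRingEnd ℂ) (f x) * f x
        = (starRingEnd ℂ) z * ((starRingEnd ℂ) (f x) * f x) by ring,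
      GP_conj_self]
  rw [tsum_congr l1, tsum_congr l2, tsum_mul_left, tsum_mul_left,
    ← Complex.ofReal_tsum] at key
  have hS : ((∑' x, ‖f x‖ ^ 2 : ℝ) : ℂ) = 0 := by
    by_contra hS
    have h2 := mul_right_cancel₀ hS key
    have him : z.im = -z.im := by
      conv_lhs => rw [h2]
      simp
    exact hz (by linarith)
  intro x
  have h0 : (∑' x, ‖f x‖ ^ 2 : ℝ) = 0 := by exact_mod_cast hS
  have hle : ‖f x‖ ^ 2 ≤ 0 := h0 ▸ Summable.le_tsum hf x (fun j _ => by positivity)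
  have hn : ‖f x‖ = 0 := by nlinarith [norm_nonneg (f x)]
  simpa using hn

end Abstract3

section Abstract4
variable {V : Type*} [DecidableEq V] {N : V → Finset V} {z : ℂ} {D : ℕ}

private lemma GP_l2_mul_summable {f g : V → ℂ} (hf : Summable fun x => ‖f x‖ ^ 2)
    (hg : Summable fun x => ‖g x‖ ^ 2) :
    Summable fun x => f x * g x := by
  refine Summable.of_norm_bounded (hf.add hg) (fun x => ?_)
  rw [norm_mul]
  nlinarith [sq_nonneg (‖f x‖ - ‖g x‖), norm_nonneg (f x), norm_nonneg (g x)]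

private lemma GP_glike_unique (hsym : ∀ x u, u ∈ N x ↔ x ∈ N u)
    (hD : ∀ x, (N x).card ≤ D) (hz : z.im ≠ 0) {g1 g2 : V → V → ℂ}
    (h1 : GLike N z g1) (h2 : GLike N z g2) : g1 = g2 := by
  funext x y
  have key := GP_uniq0 hsym hD hz (f := fun x => g1 x y - g2 x y)
    (GP_l2_sub (h1.1 y) (h2.1 y)) (fun x => by
      rw [Finset.sum_sub_distrib, h1.2 x y, h2.2 x y]; ring) x
  exact sub_eq_zero.mp key

private lemma GP_glike_symm (hsym : ∀ x u, u ∈ N x ↔ x ∈ N u)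
    (hD : ∀ x, (N x).card ≤ D) {g : V → V → ℂ}
    (hg : GLike N z g) (p q : V) : g p q = g q p := by
  have key := GP_edge_swap hsym hD (hg.1 p) (hg.1 q)
  have hT : Summable fun x => z * (g x p * g x q) :=
    (GP_l2_mul_summable (hg.1 p) (hg.1 q)).mul_left z
  have hd1 : Summable fun x : V => (if x = q then g q p else 0 : ℂ) :=
    summable_of_ne_finset_zero (s := {q}) (fun x hx => by
      simp only [Finset.mem_singleton] at hx; simp [hx])
  have hd2 : Summable fun x : V => (if x = p then g p q else 0 : ℂ) :=
    summable_of_ne_finset_zero (s := {p}) (fun x hx => by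
      simp only [Finset.mem_singleton] at hx; simp [hx])
  have l1 : ∀ x, ∑ u ∈ N x, g x p * g u q
      = z * (g x p * g x q) + (if x = q then g q p else 0) := by
    intro x
    rw [← Finset.mul_sum, hg.2 x q]
    by_cases h : x = q
    · subst h; simp; ring
    · simp [h]; ring
  have l2 : ∀ x, ∑ u ∈ N x, g u p * g x q
      = z * (g x p * g x q) + (if x = p then g p q else 0) := by
    intro x
    rw [← Finset.sum_mul, hg.2 x p]
    by_cases h : x = p
    · subst h; simp; ring
    · simp [h]; ring
  rw [tsum_congr l1, tsum_congr l2, Summable.tsum_add hT hd1, Summable.tsum_add hT hd2] at key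
  have e1 : ∑' x, (if x = q then g q p else 0 : ℂ) = g q p := tsum_ite_eq q (fun _ => g q p)
  have e2 : ∑' x, (if x = p then g p q else 0 : ℂ) = g p q := tsum_ite_eq p (fun _ => g p q)
  rw [e1, e2] at key
  exact (add_left_cancel key).symm

private lemma GP_glike_vanish (hsym : ∀ x u, u ∈ N x ↔ x ∈ N u)
    (hD : ∀ x, (N x).card ≤ D) (hz : z.im ≠ 0) {g : V → V → ℂ}
    (hg : GLike N z g) {x y : V}
    (h : ¬ Relation.ReflTransGen (fun a b => b ∈ N a) x y) : g x y = 0 := by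
  classical
  set R := Relation.ReflTransGen (fun a b : V => b ∈ N a) with hR
  have hl2 : Summable fun u => ‖(if R u y then 0 else g u y : ℂ)‖ ^ 2 := by
    refine Summable.of_nonneg_of_le (fun u => by positivity) (fun u => ?_) (hg.1 y)
    by_cases hu : R u y
    · simp [hu]
    · simp [hu]
  have heqf : ∀ u, ∑ w ∈ N u, (if R w y then 0 else g w y)
      = z * (if R u y then 0 else g u y) := by
    intro u
    by_cases hu : R u y
    · have hall : ∀ w ∈ N u, R w y := fun w hw =>
        Relation.ReflTransGen.head ((hsym u w).1 hw) hu
      rw [Finset.sum_congr rfl (fun w hw => if_pos (hall w hw))]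
      simp [hu]
    · have hall : ∀ w ∈ N u, ¬ R w y := fun w hw hc =>
        hu (Relation.ReflTransGen.head hw hc)
      have hxy : u ≠ y := by rintro rfl; exact hu Relation.ReflTransGen.refl
      rw [Finset.sum_congr rfl (fun w hw => if_neg (hall w hw)), hg.2 u y,
        if_neg hxy, if_neg hu]
      ring
  have key := GP_uniq0 hsym hD hz hl2 heqf x
  simpa [h] using key

end Abstract4
open Finset

private lemma GP_nb_walk {V : Type*} [DecidableEq V] {T : SimpleGraph V} (htree : T.IsTree)
    (k : ℕ) (v : ℕ → V)
    (hadj : ∀ j < k, T.Adj (v j) (v (j + 1)))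
    (hnb : ∀ j, j + 2 ≤ k → v (j + 2) ≠ v j) :
    ∀ j ≤ k, ∃ w : T.Walk (v j) (v 0), w.IsPath ∧
      w.support = ((List.range (j + 1)).reverse).map v := by
  intro j
  induction j with
  | zero => intro _; exact ⟨SimpleGraph.Walk.nil, by simp, by rfl⟩
  | succ m ih =>
    intro hmk
    obtain ⟨w, hw, hsup⟩ := ih (le_trans (Nat.le_succ m) hmk)
    have hadjm : T.Adj (v (m + 1)) (v m) := (hadj m (by omega)).symm
    have hnotin : v (m + 1) ∉ w.support := by
      intro hmem
      have ht : (w.takeUntil (v (m + 1)) hmem).IsPath := hw.takeUntil hmem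
      have huniq := SimpleGraph.isAcyclic_iff_path_unique.mp htree.2
      have hpath := huniq ⟨w.takeUntil (v (m + 1)) hmem, ht⟩
        (SimpleGraph.Path.singleton (hadj m (by omega)))
      have heq : w.takeUntil (v (m + 1)) hmem
          = SimpleGraph.Walk.cons (hadj m (by omega)) SimpleGraph.Walk.nil :=
        congrArg Subtype.val hpath
      have hsupp2 := (congrArg SimpleGraph.Walk.support (w.take_spec hmem)).symm
      rw [SimpleGraph.Walk.support_append] at hsupp2
      rw [heq, SimpleGraph.Walk.support_cons, SimpleGraph.Walk.support_nil] at hsupp2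
      rw [hsup] at hsupp2
      cases m with
      | zero => simp [List.range_succ] at hsupp2
      | succ m' =>
        simp only [List.range_succ, List.map_append, List.reverse_append,
          List.map_cons, List.map_nil, List.reverse_cons, List.reverse_nil,
          List.nil_append, List.cons_append, List.singleton_append,
          List.cons.injEq] at hsupp2
        exact hnb m' (by omega) (hsupp2.2.1.symm)
    refine ⟨SimpleGraph.Walk.cons hadjm w, ?_, ?_⟩
    · rw [SimpleGraph.Walk.cons_isPath_iff]; exact ⟨hw, hnotin⟩
    · rw [SimpleGraph.Walk.support_cons, hsup]
      simp [List.range_succ]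

private lemma GP_nb_inj {V : Type*} [DecidableEq V] {T : SimpleGraph V} (htree : T.IsTree)
    (k : ℕ) (v : ℕ → V)
    (hadj : ∀ j < k, T.Adj (v j) (v (j + 1)))
    (hnb : ∀ j, j + 2 ≤ k → v (j + 2) ≠ v j) :
    ∀ i j, i ≤ k → j ≤ k → i ≠ j → v i ≠ v j := by
  have main : ∀ i j, i < j → j ≤ k → v i ≠ v j := by
    intro i j hij hjk
    obtain ⟨w, hw, hsup⟩ := GP_nb_walk htree k v hadj hnb j hjk
    have hnodup := hw.support_nodup
    rw [hsup] at hnodup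
    have hpw : ((List.range (j + 1)).reverse).Pairwise (fun a b => v a ≠ v b) := by
      rw [List.Nodup, List.pairwise_map] at hnodup
      exact hnodup
    refine (haveI : Std.Symm (fun a b : ℕ => v a ≠ v b) := ⟨by intro a b h e; exact h e.symm⟩; hpw.forall) ?_ ?_ ?_
    · rw [List.mem_reverse, List.mem_range]; omega
    · rw [List.mem_reverse, List.mem_range]; omega
    · omega
  intro i j hi hj hij
  rcases lt_or_gt_of_ne hij with h | h
  · exact main i j h hj
  · exact fun e => main j i h hi e.symm

section C
variable {V : Type*} [DecidableEq V]

/-- Neighbor structure of `T` with the edge `{a, b}` deleted. -/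
private def GPND (T : SimpleGraph V) [T.LocallyFinite] (a b : V) : V → Finset V :=
  fun x => if x = a then (T.neighborFinset x).erase b
    else if x = b then (T.neighborFinset x).erase a else T.neighborFinset x

private lemma GPND_mem (T : SimpleGraph V) [T.LocallyFinite] {a b : V} (hne : a ≠ b)
    (x u : V) : u ∈ GPND T a b x ↔
      T.Adj x u ∧ ¬((x = a ∧ u = b) ∨ (x = b ∧ u = a)) := by
  unfold GPND
  by_cases hxa : x = a
  · subst hxa
    simp [Finset.mem_erase, SimpleGraph.mem_neighborFinset, hne, and_comm]
  · by_cases hxb : x = b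
    · subst hxb
      simp [Finset.mem_erase, SimpleGraph.mem_neighborFinset, hxa, and_comm]
    · simp [hxa, hxb, SimpleGraph.mem_neighborFinset]

private lemma GPND_sym (T : SimpleGraph V) [T.LocallyFinite] {a b : V} (hne : a ≠ b) :
    ∀ x u, u ∈ GPND T a b x ↔ x ∈ GPND T a b u := by
  intro x u
  rw [GPND_mem T hne, GPND_mem T hne]
  constructor <;> rintro ⟨h1, h2⟩ <;> exact ⟨h1.symm, fun hc => h2 (by tauto)⟩

private lemma GPND_card (T : SimpleGraph V) [T.LocallyFinite] {a b : V} {D : ℕ}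
    (hdeg : ∀ v : V, T.degree v ≤ D) (x : V) : (GPND T a b x).card ≤ D := by
  have hsub : GPND T a b x ⊆ T.neighborFinset x := by
    unfold GPND
    split
    · exact Finset.erase_subset _ _
    · split
      · exact Finset.erase_subset _ _
      · exact Finset.Subset.refl _
  exact le_trans (Finset.card_le_card hsub) (hdeg x)

private lemma GPND_sum (T : SimpleGraph V) [T.LocallyFinite] {a b : V} (hab : T.Adj a b)
    (x : V) (h : V → ℂ) :
    (∑ u ∈ T.neighborFinset x, if (x = a ∧ u = b) ∨ (x = b ∧ u = a) then 0 else h u)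
      = ∑ u ∈ GPND T a b x, h u := by
  have hne : a ≠ b := hab.ne
  by_cases hxa : x = a
  · have hxb : x ≠ b := by rw [hxa]; exact hne
    have e1 : ∀ u ∈ T.neighborFinset x,
        (if (x = a ∧ u = b) ∨ (x = b ∧ u = a) then (0 : ℂ) else h u)
          = (if u = b then (0 : ℂ) else h u) :=
      fun u _ => if_congr (by simp [hxa, hxb, hne, hne.symm]) rfl rfl
    rw [Finset.sum_congr rfl e1]
    unfold GPND
    rw [if_pos hxa]
    calc ∑ u ∈ T.neighborFinset x, (if u = b then (0 : ℂ) else h u)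
        = ∑ u ∈ (T.neighborFinset x).erase b, (if u = b then (0 : ℂ) else h u) :=
          (Finset.sum_erase _ (by simp)).symm
      _ = ∑ u ∈ (T.neighborFinset x).erase b, h u :=
          Finset.sum_congr rfl (fun u hu => if_neg (Finset.ne_of_mem_erase hu))
  · by_cases hxb : x = b
    · have e1 : ∀ u ∈ T.neighborFinset x,
          (if (x = a ∧ u = b) ∨ (x = b ∧ u = a) then (0 : ℂ) else h u)
            = (if u = a then (0 : ℂ) else h u) :=
        fun u _ => if_congr (by simp [hxa, hxb, hne, hne.symm]) rfl rfl
      rw [Finset.sum_congr rfl e1]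
      unfold GPND
      rw [if_neg hxa, if_pos hxb]
      calc ∑ u ∈ T.neighborFinset x, (if u = a then (0 : ℂ) else h u)
          = ∑ u ∈ (T.neighborFinset x).erase a, (if u = a then (0 : ℂ) else h u) :=
            (Finset.sum_erase _ (by simp)).symm
        _ = ∑ u ∈ (T.neighborFinset x).erase a, h u :=
            Finset.sum_congr rfl (fun u hu => if_neg (Finset.ne_of_mem_erase hu))
    · have e1 : ∀ u ∈ T.neighborFinset x,
          (if (x = a ∧ u = b) ∨ (x = b ∧ u = a) then (0 : ℂ) else h u) = h u :=
        fun u _ => if_neg (by tauto)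
      rw [Finset.sum_congr rfl e1]
      unfold GPND
      rw [if_neg hxa, if_neg hxb]

private lemma GPND_sum2 (T : SimpleGraph V) [T.LocallyFinite] {a b : V} (hab : T.Adj a b)
    (x : V) (h : V → ℂ) :
    ∑ u ∈ GPND T a b x, h u = (∑ u ∈ T.neighborFinset x, h u)
      - (if x = a then h b else if x = b then h a else 0) := by
  have hne : a ≠ b := hab.ne
  by_cases hxa : x = a
  · rw [if_pos hxa]
    unfold GPND
    rw [if_pos hxa, eq_sub_iff_add_eq]
    exact Finset.sum_erase_add _ _ (by rw [hxa]; exact (SimpleGraph.mem_neighborFinset _ _ _).2 hab)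
  · by_cases hxb : x = b
    · rw [if_neg hxa, if_pos hxb]
      unfold GPND
      rw [if_neg hxa, if_pos hxb, eq_sub_iff_add_eq]
      exact Finset.sum_erase_add _ _
        (by rw [hxb]; exact (SimpleGraph.mem_neighborFinset _ _ _).2 hab.symm)
    · rw [if_neg hxa, if_neg hxb, sub_zero]
      unfold GPND
      rw [if_neg hxa, if_neg hxb]

end C

section D
variable {V : Type*} [DecidableEq V]

private lemma GP_step (T : SimpleGraph V) [T.LocallyFinite]
    (htree : T.IsTree) {D : ℕ} (hdeg : ∀ v : V, T.degree v ≤ D) {z : ℂ} (hz : z.im ≠ 0)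
    {Gr : V → V → ℂ} (hGr : IsGreen T z Gr) {gdel : V → V → V → V → ℂ}
    (hgdel : ∀ a b : V, T.Adj a b → IsGreenDel T a b z (gdel a b))
    {a b : V} (hab : T.Adj a b) {y : V}
    (hy : Relation.ReflTransGen (fun x u => u ∈ GPND T a b x) b y) :
    Gr a y = - gdel b a a a * Gr b y := by
  have hne : a ≠ b := hab.ne
  have hsymND := GPND_sym T (a := a) (b := b) hne
  have hDND : ∀ x, (GPND T a b x).card ≤ D := GPND_card T hdeg
  -- Green-like structures
  have hdelG : GLike (GPND T a b) z (gdel a b) := by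
    refine ⟨(hgdel a b hab).1, fun x y => ?_⟩
    have h2 := (hgdel a b hab).2 x y
    rw [GPND_sum T hab x (fun u => gdel a b u y)] at h2
    linear_combination h2
  have hdelG' : GLike (GPND T a b) z (gdel b a) := by
    refine ⟨(hgdel b a hab.symm).1, fun x y => ?_⟩
    have h2 := (hgdel b a hab.symm).2 x y
    rw [Finset.sum_congr rfl (fun u _ => if_congr (or_comm) rfl rfl),
      GPND_sum T hab x (fun u => gdel b a u y)] at h2
    linear_combination h2
  have hswap : gdel b a = gdel a b := GP_glike_unique hsymND hDND hz hdelG' hdelG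
  -- the bridge property
  have hrel : ∀ x u, (u ∈ GPND T a b x) ↔ (T \ SimpleGraph.fromEdgeSet {s(a, b)}).Adj x u := by
    intro x u
    rw [GPND_mem T hne, SimpleGraph.sdiff_adj, SimpleGraph.fromEdgeSet_adj]
    constructor
    · rintro ⟨h1, h2⟩
      refine ⟨h1, fun hc => h2 ?_⟩
      have := hc.1
      rw [Set.mem_singleton_iff, Sym2.eq_iff] at this
      exact this
    · rintro ⟨h1, h2⟩
      refine ⟨h1, fun hc => h2 ⟨?_, h1.ne⟩⟩
      rw [Set.mem_singleton_iff, Sym2.eq_iff]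
      exact hc
  have hreach : ∀ x w, Relation.ReflTransGen (fun x u => u ∈ GPND T a b x) x w
      ↔ (T \ SimpleGraph.fromEdgeSet {s(a, b)}).Reachable x w := by
    intro x w
    rw [SimpleGraph.reachable_iff_reflTransGen]
    constructor <;> intro h
    · exact Relation.ReflTransGen.mono (fun p q hpq => (hrel p q).1 hpq) _ _ h
    · exact Relation.ReflTransGen.mono (fun p q hpq => (hrel p q).2 hpq) _ _ h
  have hbridge : ¬ Relation.ReflTransGen (fun x u => u ∈ GPND T a b x) a b := by
    rw [hreach]
    have hisb := SimpleGraph.isAcyclic_iff_forall_adj_isBridge.mp htree.2 hab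
    exact SimpleGraph.isBridge_iff.mp hisb
  have hRsym : Symmetric (Relation.ReflTransGen (fun x u => u ∈ GPND T a b x)) :=
    fun ⦃p q⦄ h => (haveI : Std.Symm (fun x u => u ∈ GPND T a b x) := ⟨fun p q h => (hsymND p q).1 h⟩; Relation.ReflTransGen.symmetric).symm p q h
  have hvy : ¬ Relation.ReflTransGen (fun x u => u ∈ GPND T a b x) a y :=
    fun hc => hbridge (hc.trans (hRsym hy))
  have h1 : gdel a b a y = 0 := GP_glike_vanish hsymND hDND hz hdelG hvy
  have h2 : gdel a b a b = 0 := GP_glike_vanish hsymND hDND hz hdelG hbridge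
  -- the resolvent identity
  have hGT : GLike (fun x => T.neighborFinset x) z Gr :=
    ⟨hGr.1, fun x y => by linear_combination hGr.2 x y⟩
  have hmulC : ∀ (h : V → ℂ) (c : ℂ), (Summable fun x => ‖h x‖ ^ 2)
      → Summable fun x => ‖h x * c‖ ^ 2 := fun h c hs =>
    (hs.mul_right (‖c‖ ^ 2)).congr (fun x => by rw [norm_mul, mul_pow])
  set F : V → ℂ := fun x =>
    Gr x y - gdel a b x y + gdel a b x a * Gr b y + gdel a b x b * Gr a y with hF
  have hF2 : Summable fun x => ‖F x‖ ^ 2 :=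
    GP_l2_add (GP_l2_add (GP_l2_sub (hGr.1 y) ((hgdel a b hab).1 y))
      (hmulC _ _ ((hgdel a b hab).1 a))) (hmulC _ _ ((hgdel a b hab).1 b))
  have hFeq : ∀ x, ∑ u ∈ GPND T a b x, F u = z * F x := by
    intro x
    have hsplit : ∑ u ∈ GPND T a b x, F u
        = (∑ u ∈ GPND T a b x, Gr u y) - (∑ u ∈ GPND T a b x, gdel a b u y)
          + (∑ u ∈ GPND T a b x, gdel a b u a) * Gr b y
          + (∑ u ∈ GPND T a b x, gdel a b u b) * Gr a y := by
      rw [Finset.sum_add_distrib, Finset.sum_add_distrib, Finset.sum_sub_distrib,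
        Finset.sum_mul, Finset.sum_mul]
    rw [hsplit, GPND_sum2 T hab x (fun u => Gr u y), hGT.2 x y,
      hdelG.2 x y, hdelG.2 x a, hdelG.2 x b]
    by_cases hxa : x = a
    · have hxb : x ≠ b := by rw [hxa]; exact hne
      simp only [hF, hxa, hxb, if_pos, if_neg, if_true, if_false, hne, hne.symm]
      simp [hne]
      ring
    · by_cases hxb : x = b
      · simp only [hF, hxa, hxb]
        simp [hxa, hne.symm]
        ring
      · simp only [hF]
        simp [hxa, hxb]
        ring
  have hFa := GP_uniq0 hsymND hDND hz hF2 hFeq a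
  simp only [hF] at hFa
  rw [h1, h2] at hFa
  rw [hswap]
  linear_combination hFa

end D

section E
variable {V : Type*} [DecidableEq V]

private lemma GP_main (T : SimpleGraph V) [T.LocallyFinite]
    (htree : T.IsTree) {D : ℕ} (hdeg : ∀ v : V, T.degree v ≤ D) {z : ℂ} (hz : z.im ≠ 0)
    {Gr : V → V → ℂ} (hGr : IsGreen T z Gr) {gdel : V → V → V → V → ℂ}
    (hgdel : ∀ a b : V, T.Adj a b → IsGreenDel T a b z (gdel a b)) :
    ∀ (k : ℕ) (v : ℕ → V), (∀ j < k, T.Adj (v j) (v (j + 1))) →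
      (∀ j, j + 2 ≤ k → v (j + 2) ≠ v j) →
      Gr (v 0) (v k) = (∏ j ∈ Finset.range k, - gdel (v (j + 1)) (v j) (v j) (v j))
        * Gr (v k) (v k) := by
  intro k
  induction k with
  | zero => intro v _ _; simp
  | succ k ih =>
    intro v hadj hnb
    have hab : T.Adj (v 0) (v 1) := hadj 0 (by omega)
    have hinj := GP_nb_inj htree (k + 1) v hadj hnb
    have hchain : ∀ m, m + 1 ≤ k + 1 →
        Relation.ReflTransGen (fun x u => u ∈ GPND T (v 0) (v 1) x) (v 1) (v (m + 1)) := by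
      intro m
      induction m with
      | zero => intro _; exact Relation.ReflTransGen.refl
      | succ n ihn =>
        intro h
        refine (ihn (by omega)).tail ?_
        rw [GPND_mem T hab.ne]
        refine ⟨hadj (n + 1) (by omega), ?_⟩
        rintro (⟨hc, -⟩ | ⟨-, hc⟩)
        · exact hinj (n + 1) 0 (by omega) (by omega) (by omega) hc
        · exact hinj (n + 2) 0 (by omega) (by omega) (by omega) hc
    have hstep := GP_step T htree hdeg hz hGr hgdel hab (hchain k (by omega))
    have hIH := ih (fun j => v (j + 1)) (fun j hj => hadj (j + 1) (by omega))
      (fun j hj => hnb (j + 1) (by omega))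
    rw [Finset.prod_range_succ']
    rw [hstep, hIH]
    ring
end E

/-- Lemma, multiplicative formula: for a non-backtracking path
`(v_0, …, v_k)` in the tree `T`,
`G(v_0, v_k; z) = -(∏_{j<k} ζ^z(v_{j+1}, v_j)) / (2m^z(v_k))
               = -(∏_{j<k} ζ^z(v_j, v_{j+1})) / (2m^z(v_0))`. -/
theorem green_product_formula {V : Type*} [DecidableEq V]
    (T : SimpleGraph V) [T.LocallyFinite] (htree : T.IsTree)
    (D : ℕ) (hdeg : ∀ v : V, 2 ≤ T.degree v ∧ T.degree v ≤ D)
    (z : ℂ) (hz : z.im ≠ 0)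
    (Gr : V → V → ℂ) (hGr : IsGreen T z Gr)
    (gdel : V → V → V → V → ℂ)
    (hgdel : ∀ a b : V, T.Adj a b → IsGreenDel T a b z (gdel a b))
    (zeta : V → V → ℂ) (hzeta : ∀ a b : V, zeta a b = - gdel a b b b)
    (twoM : V → ℂ) (htwoM : ∀ v : V, twoM v = - (Gr v v)⁻¹)
    (k : ℕ) (v : ℕ → V)
    (hadj : ∀ j < k, T.Adj (v j) (v (j + 1)))
    (hnb : ∀ j, j + 2 ≤ k → v (j + 2) ≠ v j) :
    Gr (v 0) (v k) = - (∏ j ∈ Finset.range k, zeta (v (j + 1)) (v j)) / twoM (v k) ∧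
    Gr (v 0) (v k) = - (∏ j ∈ Finset.range k, zeta (v j) (v (j + 1))) / twoM (v 0) := by
  have hdegD : ∀ w : V, T.degree w ≤ D := fun w => (hdeg w).2
  have hdiv : ∀ (P G : ℂ), - P / (- G⁻¹) = P * G := by
    intro P G
    rw [neg_div_neg_eq, div_eq_mul_inv, inv_inv]
  constructor
  · have h1 := GP_main T htree hdegD hz hGr hgdel k v hadj hnb
    rw [htwoM, hdiv]
    rw [Finset.prod_congr rfl (fun j _ => (hzeta (v (j + 1)) (v j)).symm)] at h1
    exact h1
  · -- reversed path
    set w : ℕ → V := fun j => v (k - j) with hw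
    have hadjW : ∀ j < k, T.Adj (w j) (w (j + 1)) := by
      intro j hj
      have h := hadj (k - j - 1) (by omega)
      rw [show k - j - 1 + 1 = k - j from by omega] at h
      simp only [hw]
      rw [show k - (j + 1) = k - j - 1 from by omega]
      exact h.symm
    have hnbW : ∀ j, j + 2 ≤ k → w (j + 2) ≠ w j := by
      intro j hj
      have h := hnb (k - j - 2) (by omega)
      rw [show k - j - 2 + 2 = k - j from by omega] at h
      simp only [hw]
      rw [show k - (j + 2) = k - j - 2 from by omega]
      exact h.symm
    have h2 := GP_main T htree hdegD hz hGr hgdel k w hadjW hnbW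
    have hw0 : w 0 = v k := by simp [hw]
    have hwk : w k = v 0 := by simp [hw]
    rw [hw0, hwk] at h2
    -- symmetry of Gr
    have hsymT : ∀ x u, u ∈ T.neighborFinset x ↔ x ∈ T.neighborFinset u := by
      intro x u
      rw [SimpleGraph.mem_neighborFinset, SimpleGraph.mem_neighborFinset]
      exact ⟨fun h => h.symm, fun h => h.symm⟩
    have hDT : ∀ x, (T.neighborFinset x).card ≤ D := fun x => hdegD x
    have hGT : GLike (fun x => T.neighborFinset x) z Gr :=
      ⟨hGr.1, fun x y => by linear_combination hGr.2 x y⟩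
    have hsymm : Gr (v 0) (v k) = Gr (v k) (v 0) := GP_glike_symm hsymT hDT hGT _ _
    rw [hsymm, h2, htwoM, hdiv]
    congr 1
    -- product reindexing
    rw [← Finset.prod_range_reflect (fun j => zeta (v j) (v (j + 1))) k]
    refine Finset.prod_congr rfl (fun j hj => ?_)
    rw [Finset.mem_range] at hj
    have e1 : w (j + 1) = v (k - 1 - j) := by
      simp only [hw]; congr 1; omega
    have e2 : w j = v (k - 1 - j + 1) := by
      simp only [hw]; congr 1; omega
    rw [hzeta, e1, e2]
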